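/- arXiv:2409.15056 — 2 statements merged into one kernel-verified Lean document; each statement's English description precedes it below -/
import Mathlib

section
/- If $N_1$ and $N_2$ are two cyclic submodules of $\Omega^2$ (with $\Omega = \mathbb{F}_p[[T]]$) such that $N_1 \cap N_2 \neq 0$, then there exist nonnegative integers $a, b$ with $T^a N_1 = T^b N_2$. -/
/-- `Ω = 𝔽_p[[T]]`, the ring of formal power series over `𝔽_p`. -/
abbrev Omega (p : ℕ) : Type := PowerSeries (ZMod p)

theorem cyclic_inter_ne_bot_exists_shift (p : ℕ) (hp : p.Prime)
    (N₁ N₂ : Submodule (Omega p) (Omega p × Omega p))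
    (h₁ : ∃ x, N₁ = Submodule.span (Omega p) {x})
    (h₂ : ∃ x, N₂ = Submodule.span (Omega p) {x})
    (h : N₁ ⊓ N₂ ≠ ⊥) :
    ∃ a b : ℕ,
      Submodule.map (((PowerSeries.X : Omega p) ^ a) • (LinearMap.id (M := Omega p × Omega p))) N₁
        = Submodule.map (((PowerSeries.X : Omega p) ^ b) • (LinearMap.id (M := Omega p × Omega p))) N₂ := by
  haveI := Fact.mk hp
  obtain ⟨x, rfl⟩ := h₁
  obtain ⟨y, rfl⟩ := h₂
  -- get a nonzero common element
  obtain ⟨z, hz, hz0⟩ := Submodule.exists_mem_ne_zero_of_ne_bot h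
  obtain ⟨hz1, hz2⟩ := hz
  obtain ⟨r, hr⟩ := Submodule.mem_span_singleton.mp hz1
  obtain ⟨s, hs⟩ := Submodule.mem_span_singleton.mp hz2
  have hr0 : r ≠ 0 := by rintro rfl; simp [← hr] at hz0
  have hs0 : s ≠ 0 := by rintro rfl; simp [← hs] at hz0
  obtain ⟨a, u, hu⟩ := IsDiscreteValuationRing.eq_unit_mul_pow_irreducible hr0
    PowerSeries.X_irreducible
  obtain ⟨b, v, hv⟩ := IsDiscreteValuationRing.eq_unit_mul_pow_irreducible hs0
    PowerSeries.X_irreducible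
  refine ⟨a, b, ?_⟩
  have hmap : ∀ (c : Omega p) (w : Omega p × Omega p),
      Submodule.map (c • (LinearMap.id (M := Omega p × Omega p)))
        (Submodule.span (Omega p) {w}) = Submodule.span (Omega p) {c • w} := by
    intro c w
    rw [Submodule.map_span, Set.image_singleton]
    rfl
  rw [hmap, hmap]
  have key : ((PowerSeries.X : Omega p) ^ a) • x
      = (((u⁻¹ : (Omega p)ˣ) : Omega p) * (v : Omega p)) • (((PowerSeries.X : Omega p) ^ b) • y) := by
    have h1 : (u : Omega p) • ((PowerSeries.X : Omega p) ^ a • x)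
        = (v : Omega p) • ((PowerSeries.X : Omega p) ^ b • y) := by
      rw [smul_smul, smul_smul, ← hu, ← hv, hr, hs]
    have := congrArg (fun w => ((u⁻¹ : (Omega p)ˣ) : Omega p) • w) h1
    simpa [smul_smul, mul_assoc] using this
  rw [key]
  exact Submodule.span_singleton_smul_eq ((u⁻¹).isUnit.mul v.isUnit) _
end

section
/- For the uniform distribution on pairs of maximal cyclic submodules of $(\mathbb{F}_p[T]/(T^n))^2$, the probability that the two submodules are distinct is $1 - \frac{1}{(p+1)p^{n-1}}$, which is at least $1 - \frac{1}{p+1}$. -/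
open Polynomial

/-- `Ωₙ = 𝔽_p[T]/(Tⁿ)`. -/
abbrev Omegan (p n : ℕ) : Type :=
  Polynomial (ZMod p) ⧸ Ideal.span {(X : Polynomial (ZMod p)) ^ n}

/-- The image of `T` in `𝔽_p[T]/(Tⁿ)`. -/
noncomputable def Tn (p n : ℕ) : Omegan p n :=
  Ideal.Quotient.mk _ X

/-- The submodule `T · Ωₙ²` of `Ωₙ²`. -/
noncomputable def TOmegan2 (p n : ℕ) : Submodule (Omegan p n) (Omegan p n × Omegan p n) :=
  Submodule.prod (Ideal.span {Tn p n}) (Ideal.span {Tn p n})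

/-- A cyclic submodule of `Ωₙ²` is maximal if it is not contained in `T · Ωₙ²`. -/
def IsMaximalCyclic (p n : ℕ) (N : Submodule (Omegan p n) (Omegan p n × Omegan p n)) : Prop :=
  (∃ x, N = Submodule.span (Omegan p n) {x}) ∧ ¬ N ≤ TOmegan2 p n

/-! ### Auxiliary material -/

/-- Evaluation at `0`, as a ring hom `Ωₙ → 𝔽_p`. -/
noncomputable def ev (p : ℕ) {n : ℕ} (hn : 1 ≤ n) : Omegan p n →+* ZMod p :=
  Ideal.Quotient.lift _ (evalRingHom 0) (by
    intro g hg
    rw [Ideal.mem_span_singleton] at hg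
    obtain ⟨c, rfl⟩ := hg
    simp [zero_pow (by omega : n ≠ 0)])

lemma ev_mk (p : ℕ) {n : ℕ} (hn : 1 ≤ n) (g : Polynomial (ZMod p)) :
    ev p hn (Ideal.Quotient.mk _ g) = g.eval 0 := rfl

lemma mem_spanT_iff (p : ℕ) {n : ℕ} (hn : 1 ≤ n) (r : Omegan p n) :
    r ∈ Ideal.span {Tn p n} ↔ ev p hn r = 0 := by
  constructor
  · intro h
    rw [Ideal.mem_span_singleton] at h
    obtain ⟨c, rfl⟩ := h
    obtain ⟨g, rfl⟩ := Ideal.Quotient.mk_surjective c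
    show ev p hn (Ideal.Quotient.mk _ (X * g)) = 0
    simp [ev_mk]
  · intro h
    obtain ⟨g, rfl⟩ := Ideal.Quotient.mk_surjective r
    rw [ev_mk] at h
    rw [Ideal.mem_span_singleton]
    refine ⟨Ideal.Quotient.mk _ g.divX, ?_⟩
    show _ = Ideal.Quotient.mk _ X * Ideal.Quotient.mk _ g.divX
    rw [← map_mul]
    conv_lhs => rw [← g.X_mul_divX_add]
    have h0 : g.coeff 0 = 0 := by rwa [coeff_zero_eq_eval_zero]
    rw [h0, map_zero, add_zero]

lemma nilpotent_of_mem_spanT (p : ℕ) {n : ℕ} (r : Omegan p n)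
    (h : r ∈ Ideal.span {Tn p n}) : IsNilpotent r := by
  rw [Ideal.mem_span_singleton] at h
  obtain ⟨c, rfl⟩ := h
  refine ⟨n, ?_⟩
  rw [mul_pow]
  have : (Tn p n) ^ n = 0 := by
    show (Ideal.Quotient.mk _ X)^n = 0
    rw [← map_pow, Ideal.Quotient.eq_zero_iff_mem]
    exact Ideal.mem_span_singleton_self _
  rw [this, zero_mul]

lemma isUnit_of_ev_ne (p : ℕ) {n : ℕ} (hp : p.Prime) (hn : 1 ≤ n) (r : Omegan p n)
    (h : ev p hn r ≠ 0) : IsUnit r := by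
  haveI : Fact p.Prime := ⟨hp⟩
  set c := ev p hn r with hc
  have hs : r - algebraMap (ZMod p) (Omegan p n) c ∈ Ideal.span {Tn p n} := by
    rw [mem_spanT_iff p hn, map_sub]
    have : ev p hn (algebraMap (ZMod p) (Omegan p n) c) = c := by
      show ev p hn (Ideal.Quotient.mk _ (C c)) = c
      simp [ev_mk]
    rw [this, sub_self]
  have hnil := nilpotent_of_mem_spanT p _ hs
  have hu : IsUnit (algebraMap (ZMod p) (Omegan p n) c) :=
    (IsUnit.map _ (isUnit_iff_ne_zero.mpr h))
  have := hnil.isUnit_add_right_of_commute hu (Commute.all _ _)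
  simpa using this

lemma card_omegan (p n : ℕ) (hp : p.Prime) :
    Nat.card (Omegan p n) = p ^ n := by
  haveI : Fact p.Prime := ⟨hp⟩
  have hb := AdjoinRoot.powerBasisAux' (R := ZMod p) (g := (X : Polynomial (ZMod p))^n)
    (monic_X_pow n)
  have h1 : Nat.card (Omegan p n)
      = Nat.card (Fin ((X : Polynomial (ZMod p))^n).natDegree →₀ ZMod p) :=
    Nat.card_congr hb.repr.toEquiv
  rw [h1, Nat.card_congr (Finsupp.equivFunOnFinite), Nat.card_fun, Nat.card_zmod,
    Nat.card_eq_fintype_card, Fintype.card_fin, natDegree_X_pow]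

instance omegan_finite (p n : ℕ) [Fact p.Prime] : Finite (Omegan p n) := by
  have hb := AdjoinRoot.powerBasisAux' (R := ZMod p) (g := (X : Polynomial (ZMod p))^n)
    (monic_X_pow n)
  exact Finite.of_equiv _ hb.repr.toEquiv.symm

lemma ker_ev (p : ℕ) {n : ℕ} (hn : 1 ≤ n) :
    RingHom.ker (ev p (n := n) hn) = Ideal.span {Tn p n} := by
  ext r
  rw [RingHom.mem_ker, mem_spanT_iff p hn]

lemma ev_surjective (p : ℕ) {n : ℕ} (hn : 1 ≤ n) : Function.Surjective (ev p (n := n) hn) := by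
  intro c
  exact ⟨Ideal.Quotient.mk _ (C c), by simp [ev_mk]⟩

lemma card_spanT (p : ℕ) {n : ℕ} (hp : p.Prime) (hn : 1 ≤ n) :
    Nat.card (Ideal.span {Tn p n}) = p ^ (n - 1) := by
  haveI : Fact p.Prime := ⟨hp⟩
  have h1 := Submodule.card_eq_card_quotient_mul_card (R := Omegan p n) (Ideal.span {Tn p n})
  have h2 : Nat.card (Omegan p n ⧸ Ideal.span {Tn p n}) = p := by
    rw [← ker_ev p hn,
      Nat.card_congr (RingHom.quotientKerEquivOfSurjective (ev_surjective p hn)).toEquiv,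
      Nat.card_zmod]
  rw [card_omegan p n hp, h2] at h1
  have hp0 : 0 < p := hp.pos
  have : p ^ n = p ^ (n - 1) * p := by
    rw [← pow_succ]; congr 1; omega
  rw [this] at h1
  exact (Nat.eq_of_mul_eq_mul_right hp0 (by linarith)).symm

section main
variable (p : ℕ) {n : ℕ} (hp : p.Prime) (hn : 1 ≤ n)

/-- the explicit parametrization map of maximal cyclic submodules -/
noncomputable def paramMap : Omegan p n ⊕ (Ideal.span {Tn p n}) →
    Submodule (Omegan p n) (Omegan p n × Omegan p n)
  | Sum.inl b => Submodule.span (Omegan p n) {((1 : Omegan p n), b)}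
  | Sum.inr a => Submodule.span (Omegan p n) {((a : Omegan p n), (1 : Omegan p n))}

include hp hn

lemma one_not_mem_spanT : (1 : Omegan p n) ∉ Ideal.span {Tn p n} := by
  haveI : Fact p.Prime := ⟨hp⟩
  rw [mem_spanT_iff p hn, map_one]
  exact one_ne_zero

lemma paramMap_maximalCyclic (x : Omegan p n ⊕ (Ideal.span {Tn p n})) :
    IsMaximalCyclic p n (paramMap p x) := by
  constructor
  · cases x with
    | inl b => exact ⟨_, rfl⟩
    | inr a => exact ⟨_, rfl⟩
  · cases x with
    | inl b =>
      intro hle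
      have := hle (Submodule.mem_span_singleton_self ((1 : Omegan p n), b))
      exact one_not_mem_spanT p hp hn this.1
    | inr a =>
      intro hle
      have := hle (Submodule.mem_span_singleton_self ((a : Omegan p n), (1 : Omegan p n)))
      exact one_not_mem_spanT p hp hn this.2

lemma paramMap_injective : Function.Injective (paramMap p (n := n)) := by
  intro x y hxy
  cases x with
  | inl b =>
    cases y with
    | inl b' =>
      have : ((1 : Omegan p n), b') ∈ Submodule.span (Omegan p n) {((1 : Omegan p n), b)} := by
        rw [show Submodule.span (Omegan p n) {((1:Omegan p n), b)}
            = paramMap p (Sum.inl b) from rfl, hxy]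
        exact Submodule.mem_span_singleton_self _
      rw [Submodule.mem_span_singleton] at this
      obtain ⟨c, hc⟩ := this
      have hc1 : c * 1 = 1 := congrArg Prod.fst hc
      have hc2 : c * b = b' := congrArg Prod.snd hc
      rw [mul_one] at hc1
      rw [hc1, one_mul] at hc2
      rw [hc2]
    | inr a =>
      exfalso
      have : ((1 : Omegan p n), b) ∈
          Submodule.span (Omegan p n) {((a : Omegan p n), (1 : Omegan p n))} := by
        rw [show Submodule.span (Omegan p n) {((a:Omegan p n), (1:Omegan p n))}
            = paramMap p (Sum.inr a) from rfl, ← hxy]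
        exact Submodule.mem_span_singleton_self _
      rw [Submodule.mem_span_singleton] at this
      obtain ⟨c, hc⟩ := this
      have hc1 : c * (a : Omegan p n) = 1 := congrArg Prod.fst hc
      have : (1 : Omegan p n) ∈ Ideal.span {Tn p n} := by
        rw [← hc1]; exact Ideal.mul_mem_left _ c a.2
      exact one_not_mem_spanT p hp hn this
  | inr a =>
    cases y with
    | inl b =>
      exfalso
      have : ((1 : Omegan p n), b) ∈
          Submodule.span (Omegan p n) {((a : Omegan p n), (1 : Omegan p n))} := by
        rw [show Submodule.span (Omegan p n) {((a:Omegan p n), (1:Omegan p n))}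
            = paramMap p (Sum.inr a) from rfl, hxy]
        exact Submodule.mem_span_singleton_self _
      rw [Submodule.mem_span_singleton] at this
      obtain ⟨c, hc⟩ := this
      have hc1 : c * (a : Omegan p n) = 1 := congrArg Prod.fst hc
      have : (1 : Omegan p n) ∈ Ideal.span {Tn p n} := by
        rw [← hc1]; exact Ideal.mul_mem_left _ c a.2
      exact one_not_mem_spanT p hp hn this
    | inr a' =>
      have : ((a' : Omegan p n), (1 : Omegan p n)) ∈
          Submodule.span (Omegan p n) {((a : Omegan p n), (1 : Omegan p n))} := by
        rw [show Submodule.span (Omegan p n) {((a:Omegan p n), (1:Omegan p n))}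
            = paramMap p (Sum.inr a) from rfl, hxy]
        exact Submodule.mem_span_singleton_self _
      rw [Submodule.mem_span_singleton] at this
      obtain ⟨c, hc⟩ := this
      have hc2 : c * 1 = 1 := congrArg Prod.snd hc
      have hc1 : c * (a : Omegan p n) = (a' : Omegan p n) := congrArg Prod.fst hc
      rw [mul_one] at hc2
      rw [hc2, one_mul] at hc1
      congr 1
      exact Subtype.ext hc1

lemma paramMap_surjective (N : Submodule (Omegan p n) (Omegan p n × Omegan p n))
    (hN : IsMaximalCyclic p n N) : ∃ x, paramMap p x = N := by
  obtain ⟨⟨v, rfl⟩, hnle⟩ := hN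
  have hv : v ∉ TOmegan2 p n := fun h => hnle (Submodule.span_le.mpr (by simpa using h))
  obtain ⟨a, b⟩ := v
  by_cases ha : a ∈ Ideal.span {Tn p n}
  · -- then b is a unit
    have hb : b ∉ Ideal.span {Tn p n} := fun hb => hv ⟨ha, hb⟩
    rw [mem_spanT_iff p hn] at hb
    obtain ⟨u, hu⟩ := isUnit_of_ev_ne p hp hn b hb
    refine ⟨Sum.inr ⟨(↑u⁻¹ : Omegan p n) * a, Ideal.mul_mem_left _ _ ha⟩, ?_⟩
    show Submodule.span (Omegan p n) {(((↑u⁻¹ : Omegan p n) * a), (1:Omegan p n))} = _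
    have : (((↑u⁻¹ : Omegan p n) * a), (1:Omegan p n)) = (↑u⁻¹ : Omegan p n) • (a, b) := by
      ext
      · rfl
      · show (1 : Omegan p n) = ↑u⁻¹ * b
        rw [← hu, Units.inv_mul]
    rw [this]
    exact Submodule.span_singleton_smul_eq (Units.isUnit u⁻¹) _
  · rw [mem_spanT_iff p hn] at ha
    obtain ⟨u, hu⟩ := isUnit_of_ev_ne p hp hn a ha
    refine ⟨Sum.inl ((↑u⁻¹ : Omegan p n) * b), ?_⟩
    show Submodule.span (Omegan p n) {((1:Omegan p n), (↑u⁻¹ : Omegan p n) * b)} = _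
    have : ((1:Omegan p n), ((↑u⁻¹ : Omegan p n) * b)) = (↑u⁻¹ : Omegan p n) • (a, b) := by
      ext
      · show (1 : Omegan p n) = ↑u⁻¹ * a
        rw [← hu, Units.inv_mul]
      · rfl
    rw [this]
    exact Submodule.span_singleton_smul_eq (Units.isUnit u⁻¹) _

/-- The parametrization of maximal cyclic submodules. -/
noncomputable def paramEquiv : (Omegan p n ⊕ (Ideal.span {Tn p n})) ≃
    {N : Submodule (Omegan p n) (Omegan p n × Omegan p n) // IsMaximalCyclic p n N} := by
  apply Equiv.ofBijective (fun x => ⟨paramMap p x, paramMap_maximalCyclic p hp hn x⟩)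
  constructor
  · intro x y h
    exact paramMap_injective p hp hn (congrArg Subtype.val h)
  · rintro ⟨N, hN⟩
    obtain ⟨x, hx⟩ := paramMap_surjective p hp hn N hN
    exact ⟨x, Subtype.ext hx⟩

end main

theorem prob_distinct_eq (p n : ℕ) (hp : p.Prime) (hn : 1 ≤ n) :
    (Nat.card {x : {N : Submodule (Omegan p n) (Omegan p n × Omegan p n) // IsMaximalCyclic p n N} ×
                   {N : Submodule (Omegan p n) (Omegan p n × Omegan p n) // IsMaximalCyclic p n N} //
                x.1 ≠ x.2} : ℝ) /
      (Nat.card ({N : Submodule (Omegan p n) (Omegan p n × Omegan p n) // IsMaximalCyclic p n N} ×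
                 {N : Submodule (Omegan p n) (Omegan p n × Omegan p n) // IsMaximalCyclic p n N}) : ℝ)
      = 1 - 1 / (((p : ℝ) + 1) * (p : ℝ) ^ (n - 1))
    ∧ 1 - 1 / (((p : ℝ) + 1) * (p : ℝ) ^ (n - 1)) ≥ 1 - 1 / ((p : ℝ) + 1) := by
  classical
  haveI : Fact p.Prime := ⟨hp⟩
  set S := {N : Submodule (Omegan p n) (Omegan p n × Omegan p n) // IsMaximalCyclic p n N}
    with hSdef
  haveI : Finite S := Finite.of_equiv _ (paramEquiv p hp hn)
  have hM : Nat.card S = (p + 1) * p ^ (n - 1) := by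
    rw [← Nat.card_congr (paramEquiv p hp hn), Nat.card_sum, card_omegan p n hp,
      card_spanT p hp hn]
    have hpn : p ^ n = p * p ^ (n - 1) := by
      rw [← pow_succ']; congr 1; omega
    rw [hpn]; ring
  set M := (p + 1) * p ^ (n - 1) with hMdef
  have hM1 : 1 ≤ M := Nat.mul_pos (by omega) (pow_pos hp.pos _)
  have hprod : Nat.card (S × S) = M * M := by rw [Nat.card_prod, hM]
  have ediag : {x : S × S // x.1 = x.2} ≃ S :=
    { toFun := fun x => x.1.1
      invFun := fun s => ⟨(s, s), rfl⟩
      left_inv := by rintro ⟨⟨a, b⟩, h⟩; cases h; rfl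
      right_inv := fun s => rfl }
  have hsplit : Nat.card (S × S)
      = Nat.card {x : S × S // x.1 = x.2} + Nat.card {x : S × S // ¬ x.1 = x.2} := by
    rw [← Nat.card_sum]
    exact (Nat.card_congr (Equiv.sumCompl (fun x : S × S => x.1 = x.2))).symm
  have hne : Nat.card {x : S × S // x.1 ≠ x.2} = M * M - M := by
    have h2 : Nat.card {x : S × S // x.1 = x.2} = M := by
      rw [Nat.card_congr ediag, hM]
    rw [hprod, h2] at hsplit
    show Nat.card {x : S × S // ¬ x.1 = x.2} = M * M - M
    omega
  have hMR : (M : ℝ) = ((p : ℝ) + 1) * (p : ℝ) ^ (n - 1) := by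
    rw [hMdef]; push_cast; ring
  have hMR0 : (0 : ℝ) < (M : ℝ) := by exact_mod_cast hM1
  constructor
  · rw [hne, hprod, ← hMR]
    have hle : M ≤ M * M := Nat.le_mul_of_pos_left M (by omega)
    rw [Nat.cast_sub hle]
    push_cast
    field_simp
  · have h1 : (1 : ℝ) ≤ (p : ℝ) ^ (n - 1) := by
      apply one_le_pow₀
      exact_mod_cast hp.one_lt.le
    have hp1 : (0 : ℝ) < (p : ℝ) + 1 := by positivity
    have : 1 / (((p : ℝ) + 1) * (p : ℝ) ^ (n - 1)) ≤ 1 / ((p : ℝ) + 1) := by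
      apply one_div_le_one_div_of_le hp1
      nlinarith
    linarith
end
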